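/- Let X_1, ..., X_D be independent random vectors, each taking values in R^L and square-integrable, let f be the additive model f = Σ_{j=1}^{D} g_j(X_j) with each g_j(X_j) square-integrable, and let Y be a square-integrable real-valued target. Suppose W* ⊆ {1, ..., L} is a window for feature 1 such that g_1 depends only on the coordinates in W*, i.e., g_1(X_1) = g_{W*}(X_{1,W*}) and the out-of-window component g_{W̄*}(X_{1,W̄*}) is identically 0, with g_{W*}(X_{1,W*}) square-integrable. Let X_1' be an independent copy of X_1, independent of (X_1, ..., X_D, Y). Then the expected importance score of the full sequence of feature 1 equals the expected importance score of the window W*, and both equal 2*cov(Y, g_1(X_1)); that is, E[ I(f, X_1, {1,...,L}) ] = E[ I(f, X_1, W*) ] = 2*cov(Y, g_1(X_1)). -/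

import Mathlib

open MeasureTheory ProbabilityTheory Finset

/-- Covariance of two real-valued random variables w.r.t. a measure `μ`. -/
noncomputable def cov {Ω : Type*} [MeasurableSpace Ω] (μ : Measure Ω) (X Y : Ω → ℝ) : ℝ :=
  ∫ ω, (X ω - ∫ ω', X ω' ∂μ) * (Y ω - ∫ ω', Y ω' ∂μ) ∂μ

/-- The importance score `I(f, X 0, W)` of the time window `W` for feature `0` of the additive
model `f = Σ_j g_j (X j)` under quadratic loss: the expected increase in loss when the
coordinates of `X 0` inside `W` are replaced by the corresponding coordinates of the
independent copy `X₁'`, with all other coordinates of `X 0`, all other features, and the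
target `Y` held fixed. -/
noncomputable def windowImportance {Ω : Type*} [MeasurableSpace Ω] (μ : Measure Ω)
    {D L : ℕ} [NeZero D] (X : Fin D → Ω → (Fin L → ℝ)) (g : Fin D → (Fin L → ℝ) → ℝ)
    (Y : Ω → ℝ) (X₁' : Ω → (Fin L → ℝ)) (W : Finset (Fin L)) : ℝ :=
  (∫ ω, (Y ω - (g 0 (fun k => if k ∈ W then X₁' ω k else X 0 ω k)
      + ∑ j ∈ univ.erase 0, g j (X j ω))) ^ 2 ∂μ)
    - ∫ ω, (Y ω - ∑ j, g j (X j ω)) ^ 2 ∂μ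

/-- Two real random variables in `L²` have integrable product. -/
lemma l2_mul_integrable {Ω : Type*} [MeasurableSpace Ω] {μ : Measure Ω} {f g : Ω → ℝ}
    (hf : MemLp f 2 μ) (hg : MemLp g 2 μ) :
    Integrable (fun ω => f ω * g ω) μ := by
  have h : (1 : ENNReal) / 1 = 1 / 2 + 1 / 2 := by
    rw [ENNReal.div_add_div_same, one_div_one, one_add_one_eq_two]
    exact (ENNReal.div_self (a := 2) (by norm_num) (by norm_num)).symm
  have := hg.smul (r := 1) hf
  rw [memLp_one_iff_integrable] at this
  exact this

/-- Expansion of the integral of a squared difference of `L²` functions. -/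
lemma sq_int_expand {Ω : Type*} [MeasurableSpace Ω] {μ : Measure Ω} {f h : Ω → ℝ}
    (hf : MemLp f 2 μ) (hh : MemLp h 2 μ) :
    ∫ ω, (f ω - h ω) ^ 2 ∂μ
      = ∫ ω, f ω * f ω ∂μ - 2 * ∫ ω, f ω * h ω ∂μ + ∫ ω, h ω * h ω ∂μ := by
  have h1 : Integrable (fun ω => f ω * f ω) μ := l2_mul_integrable hf hf
  have h2 : Integrable (fun ω => f ω * h ω) μ := l2_mul_integrable hf hh
  have h3 : Integrable (fun ω => h ω * h ω) μ := l2_mul_integrable hh hh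
  calc ∫ ω, (f ω - h ω) ^ 2 ∂μ
      = ∫ ω, (f ω * f ω - 2 * (f ω * h ω) + h ω * h ω) ∂μ := by
        apply integral_congr_ae
        filter_upwards with ω
        ring
    _ = _ := by
        have hsub : Integrable (fun ω => f ω * f ω - 2 * (f ω * h ω)) μ :=
          h1.sub (h2.const_mul 2)
        rw [integral_add hsub h3, integral_sub h1 (h2.const_mul 2), integral_const_mul]

/-- The covariance of two `L²` random variables over a probability measure equals
`E[fg] - E[f]E[g]`. -/
lemma cov_eq_sub {Ω : Type*} [MeasurableSpace Ω] {μ : Measure Ω} [IsProbabilityMeasure μ]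
    {f g : Ω → ℝ} (hf : MemLp f 2 μ) (hg : MemLp g 2 μ) :
    cov μ f g = ∫ ω, f ω * g ω ∂μ - (∫ ω, f ω ∂μ) * ∫ ω, g ω ∂μ := by
  have hfi : Integrable f μ := hf.integrable one_le_two
  have hgi : Integrable g μ := hg.integrable one_le_two
  have hfg : Integrable (fun ω => f ω * g ω) μ := l2_mul_integrable hf hg
  unfold cov
  calc ∫ ω, (f ω - ∫ ω', f ω' ∂μ) * (g ω - ∫ ω', g ω' ∂μ) ∂μ
      = ∫ ω, (f ω * g ω - (∫ ω', g ω' ∂μ) * f ω - ((∫ ω', f ω' ∂μ) * g ω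
          - (∫ ω', f ω' ∂μ) * (∫ ω', g ω' ∂μ))) ∂μ := by
        apply integral_congr_ae
        filter_upwards with ω
        ring
    _ = ∫ ω, f ω * g ω ∂μ - (∫ ω', g ω' ∂μ) * (∫ ω, f ω ∂μ)
        - ((∫ ω', f ω' ∂μ) * (∫ ω, g ω ∂μ) - (∫ ω', f ω' ∂μ) * (∫ ω', g ω' ∂μ)) := by
        have h1 : Integrable (fun ω => f ω * g ω - (∫ ω', g ω' ∂μ) * f ω) μ :=
          hfg.sub (hfi.const_mul _)
        have h2 : Integrable (fun ω => (∫ ω', f ω' ∂μ) * g ω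
            - (∫ ω', f ω' ∂μ) * (∫ ω', g ω' ∂μ)) μ :=
          (hgi.const_mul _).sub (integrable_const _)
        rw [integral_sub h1 h2,
          integral_sub hfg (hfi.const_mul _),
          integral_sub (hgi.const_mul _) (integrable_const _),
          integral_const_mul, integral_const_mul, integral_const]
        simp [measure_univ]
    _ = _ := by ring

/-- Corollary to Proposition 1: if the feature-0 component `g 0` of the additive model depends
only on the coordinates of `X 0` inside the relevant window `W*` (i.e. the out-of-window
component is identically zero), then the expected importance score of the full sequence equals
the expected importance score of `W*`, and both equal `2 * cov(Y, g 0 (X 0))`. -/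
theorem expected_importance_relevant_window
    {Ω : Type*} [MeasurableSpace Ω] (μ : Measure Ω) [IsProbabilityMeasure μ]
    (D L : ℕ) [NeZero D]
    (X : Fin D → Ω → (Fin L → ℝ)) (hXmeas : ∀ j, Measurable (X j))
    (hXL2 : ∀ j, MemLp (X j) 2 μ)
    (hXindep : iIndepFun X μ)
    (g : Fin D → (Fin L → ℝ) → ℝ) (hgmeas : ∀ j, Measurable (g j))
    (hgL2 : ∀ j, MemLp (fun ω => g j (X j ω)) 2 μ)
    (Wstar : Finset (Fin L))
    -- `g 0` depends only on the coordinates inside `W*` (the out-of-window component of the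
    -- additive decomposition of `g 0` is identically `0`):
    (hgdep : ∀ x x' : Fin L → ℝ, (∀ k ∈ Wstar, x k = x' k) → g 0 x = g 0 x')
    (Y : Ω → ℝ) (hY : MemLp Y 2 μ)
    (X₁' : Ω → (Fin L → ℝ)) (hX₁'meas : Measurable X₁')
    (hid : IdentDistrib X₁' (X 0) μ μ)
    (hindep : IndepFun X₁' (fun ω => ((fun j => X j ω), Y ω)) μ) :
    windowImportance μ X g Y X₁' univ = windowImportance μ X g Y X₁' Wstar ∧
    windowImportance μ X g Y X₁' Wstar = 2 * cov μ Y (fun ω => g 0 (X 0 ω)) := by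
  classical
  -- abbreviations
  set S : Ω → ℝ := fun ω => g 0 (X 0 ω) with hS
  set T : Ω → ℝ := fun ω => ∑ j ∈ univ.erase (0 : Fin D), g j (X j ω) with hT
  set G : Ω → ℝ := fun ω => g 0 (X₁' ω) with hG
  set R : Ω → ℝ := fun ω => Y ω - T ω with hR
  -- basic L² facts
  have hSL2 : MemLp S 2 μ := hgL2 0
  have hGid : IdentDistrib G S μ μ := hid.comp (hgmeas 0)
  have hGL2 : MemLp G 2 μ := hGid.memLp_iff.mpr hSL2
  have hTL2 : MemLp T 2 μ := by
    have h := memLp_finset_sum' (μ := μ) (univ.erase (0 : Fin D)) (fun j _ => hgL2 j)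
    apply h.ae_eq
    filter_upwards with ω
    simp [hT]
  have hRL2 : MemLp R 2 μ := hY.sub hTL2
  have hSi : Integrable S μ := hSL2.integrable one_le_two
  have hGi : Integrable G μ := hGL2.integrable one_le_two
  have hTi : Integrable T μ := hTL2.integrable one_le_two
  have hRi : Integrable R μ := hRL2.integrable one_le_two
  have hYi : Integrable Y μ := hY.integrable one_le_two
  -- the two importance scores coincide, and both equal the `(R - G)²/(R - S)²` form
  have hWG : ∀ W : Finset (Fin L),
      (∀ ω, g 0 (fun k => if k ∈ W then X₁' ω k else X 0 ω k) = G ω) →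
      windowImportance μ X g Y X₁' W
        = (∫ ω, (R ω - G ω) ^ 2 ∂μ) - ∫ ω, (R ω - S ω) ^ 2 ∂μ := by
    intro W hW
    unfold windowImportance
    congr 1
    · apply integral_congr_ae
      filter_upwards with ω
      rw [hW ω, hR, hT]
      ring
    · apply integral_congr_ae
      filter_upwards with ω
      have : ∑ j, g j (X j ω) = S ω + T ω := by
        rw [hS, hT]
        exact (Finset.add_sum_erase univ (fun j => g j (X j ω)) (mem_univ 0)).symm
      rw [this, hR]
      ring
  have hWuniv : windowImportance μ X g Y X₁' univ
      = (∫ ω, (R ω - G ω) ^ 2 ∂μ) - ∫ ω, (R ω - S ω) ^ 2 ∂μ := by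
    apply hWG
    intro ω
    rw [hG]
    congr 1
    funext k
    exact if_pos (mem_univ k)
  have hWstar : windowImportance μ X g Y X₁' Wstar
      = (∫ ω, (R ω - G ω) ^ 2 ∂μ) - ∫ ω, (R ω - S ω) ^ 2 ∂μ := by
    apply hWG
    intro ω
    exact hgdep _ _ (fun k hk => if_pos hk)
  refine ⟨hWuniv.trans hWstar.symm, ?_⟩
  rw [hWstar]
  -- key independence/identical-distribution consequences
  have hGG : ∫ ω, G ω * G ω ∂μ = ∫ ω, S ω * S ω ∂μ :=
    (hGid.comp (measurable_id.mul measurable_id)).integral_eq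
  have hGint : ∫ ω, G ω ∂μ = ∫ ω, S ω ∂μ := hGid.integral_eq
  -- `G` is independent of `R`
  have hGR : IndepFun G R μ := by
    have hψ : Measurable (fun p : (Fin D → Fin L → ℝ) × ℝ =>
        p.2 - ∑ j ∈ univ.erase (0 : Fin D), g j (p.1 j)) := by
      apply measurable_snd.sub
      exact Finset.measurable_sum _ fun j _ =>
        (hgmeas j).comp ((measurable_pi_apply j).comp measurable_fst)
    exact hindep.comp (hgmeas 0) hψ
  have hRG : ∫ ω, R ω * G ω ∂μ = (∫ ω, R ω ∂μ) * ∫ ω, S ω ∂μ := by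
    have := hGR.symm.integral_mul_eq_mul_integral hRi.aestronglyMeasurable hGi.aestronglyMeasurable
    rw [← hGint]
    exact this
  -- `T` and `S` are uncorrelated by independence of the features
  have hTS : ∫ ω, T ω * S ω ∂μ = (∫ ω, T ω ∂μ) * ∫ ω, S ω ∂μ := by
    have step : ∀ j ∈ univ.erase (0 : Fin D),
        ∫ ω, g j (X j ω) * S ω ∂μ = (∫ ω, g j (X j ω) ∂μ) * ∫ ω, S ω ∂μ := by
      intro j hj
      have hj0 : j ≠ 0 := (Finset.mem_erase.mp hj).1
      have hind : IndepFun (fun ω => g j (X j ω)) S μ :=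
        (hXindep.indepFun hj0).comp (hgmeas j) (hgmeas 0)
      exact hind.integral_mul_eq_mul_integral ((hgL2 j).integrable one_le_two).aestronglyMeasurable hSi.aestronglyMeasurable
    calc ∫ ω, T ω * S ω ∂μ
        = ∫ ω, ∑ j ∈ univ.erase (0 : Fin D), g j (X j ω) * S ω ∂μ := by
          apply integral_congr_ae
          filter_upwards with ω
          rw [hT, Finset.sum_mul]
      _ = ∑ j ∈ univ.erase (0 : Fin D), ∫ ω, g j (X j ω) * S ω ∂μ :=
          integral_finset_sum _ (fun j _ => l2_mul_integrable (hgL2 j) hSL2)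
      _ = ∑ j ∈ univ.erase (0 : Fin D), (∫ ω, g j (X j ω) ∂μ) * ∫ ω, S ω ∂μ :=
          Finset.sum_congr rfl step
      _ = (∑ j ∈ univ.erase (0 : Fin D), ∫ ω, g j (X j ω) ∂μ) * ∫ ω, S ω ∂μ :=
          (Finset.sum_mul (univ.erase (0 : Fin D))
            (fun j => ∫ ω, g j (X j ω) ∂μ) (∫ ω, S ω ∂μ)).symm
      _ = (∫ ω, T ω ∂μ) * ∫ ω, S ω ∂μ := by
          rw [hT, integral_finset_sum _ (fun j _ => (hgL2 j).integrable one_le_two)]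
  -- expand both squared integrals
  rw [sq_int_expand hRL2 hGL2, sq_int_expand hRL2 hSL2, hGG, hRG]
  -- reduce to covariance identities
  have hRS : ∫ ω, R ω * S ω ∂μ = ∫ ω, Y ω * S ω ∂μ - (∫ ω, T ω ∂μ) * ∫ ω, S ω ∂μ := by
    rw [← hTS]
    calc ∫ ω, R ω * S ω ∂μ = ∫ ω, (Y ω * S ω - T ω * S ω) ∂μ := by
          apply integral_congr_ae
          filter_upwards with ω
          rw [hR]
          ring
      _ = _ := integral_sub (l2_mul_integrable hY hSL2) (l2_mul_integrable hTL2 hSL2)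
  have hRint : ∫ ω, R ω ∂μ = ∫ ω, Y ω ∂μ - ∫ ω, T ω ∂μ := by
    rw [hR]
    exact integral_sub hYi hTi
  rw [hRS, hRint, cov_eq_sub hY hSL2]
  ring
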